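/- Let $\lambda, \mu$ be complex numbers with $\lambda \neq 0$ and $\lambda n + \mu \neq 0$ for all integers $n \ge 0$, and set $\kappa = \mu/\lambda$. Let $d_n^{(k)}$ be the determinant of the $n \times n$ Hankel matrix with $(i,j)$-entry $\frac{1}{\lambda(i+j+k-2)+\mu}$. Then $d_n^{(k)} = \frac{1}{\lambda^n} \cdot \frac{\prod_{i=1}^{n-1}(i!)^2}{\prod_{i=1}^{n}\prod_{j=1}^{n}(i+j+k+\kappa-2)}$. -/

import Mathlib

open Finset Matrix

lemma det_row_col_factor {m : ℕ} (u w : Fin m → ℂ) (A : Matrix (Fin m) (Fin m) ℂ) :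
    (Matrix.of fun i j => u i * (w j * A i j)).det =
      (∏ i, u i) * ((∏ j, w j) * A.det) := by
  have : (Matrix.of fun i j => u i * (w j * A i j)) =
      Matrix.of fun i j => u i * (Matrix.of fun i j => w j * A i j) i j := rfl
  rw [this, Matrix.det_mul_column, Matrix.det_mul_row]

lemma cauchy_det (x y : ℕ → ℂ) :
    ∀ n : ℕ, (∀ i j, i < n → j < n → x i + y j ≠ 0) →
      (Matrix.of fun i j : Fin n => (x (i : ℕ) + y (j : ℕ))⁻¹).det =
        (∏ j ∈ range n, ∏ i ∈ range j, ((x j - x i) * (y j - y i))) /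
          ∏ i ∈ range n, ∏ j ∈ range n, (x i + y j) := by
  intro n
  induction n with
  | zero => simp
  | succ n ih =>
    intro hxy
    set L : Fin (n+1) := Fin.last n with hL
    have hLv : (L : ℕ) = n := rfl
    have hne : ∀ i j : Fin (n+1), x (i:ℕ) + y (j:ℕ) ≠ 0 := fun i j => hxy _ _ i.isLt j.isLt
    -- matrices
    set M : Matrix (Fin (n+1)) (Fin (n+1)) ℂ := Matrix.of fun i j => (x (i:ℕ) + y (j:ℕ))⁻¹ with hMdef
    set C : Matrix (Fin (n+1)) (Fin (n+1)) ℂ :=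
      Matrix.of fun i j => if j = L then 1 else (y (L:ℕ) - y (j:ℕ)) * (x (i:ℕ) + y (j:ℕ))⁻¹ with hCdef
    set D : Matrix (Fin (n+1)) (Fin (n+1)) ℂ :=
      Matrix.of fun i j => if i = L then C L j else
        if j = L then 0 else (y (L:ℕ) - y (j:ℕ)) * (x (L:ℕ) - x (i:ℕ)) *
          ((x (i:ℕ) + y (j:ℕ))⁻¹ * (x (L:ℕ) + y (j:ℕ))⁻¹) with hDdef
    -- step A : column operations + factor rows
    have stepA : M.det = (∏ i : Fin (n+1), (x (i:ℕ) + y (L:ℕ))⁻¹) * C.det := by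
      have h1 : M.det = (Matrix.of fun i j : Fin (n+1) =>
          (x (i:ℕ) + y (L:ℕ))⁻¹ * C i j).det := by
        rw [← Matrix.det_transpose M, ← Matrix.det_transpose
          (Matrix.of fun i j : Fin (n+1) => (x (i:ℕ) + y (L:ℕ))⁻¹ * C i j)]
        refine (Matrix.det_eq_of_forall_row_eq_smul_add_const
          (fun j => if j = L then 0 else (-1)) L (by simp) ?_).symm
        intro j i
        simp only [Matrix.transpose_apply, Matrix.of_apply, hCdef, hMdef]
        by_cases hj : j = L
        · simp [hj, hne]
        · simp only [hj, if_neg hj, if_false]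
          have h1 := hne i j
          have h2 := hne i L
          field_simp
          ring
      rw [h1, Matrix.det_mul_column]
    -- step B : row operations
    have stepB : C.det = D.det := by
      refine (Matrix.det_eq_of_forall_row_eq_smul_add_const
        (fun i => if i = L then 0 else (-1)) L (by simp) ?_).symm
      intro i j
      simp only [Matrix.of_apply, hDdef, hCdef]
      by_cases hi : i = L
      · simp [hi]
      · simp only [if_neg hi]
        by_cases hj : j = L
        · simp [hj]
        · simp only [if_neg hj]
          have h1 := hne i j
          have h2 := hne L j
          field_simp
          ring
    -- step C : expand along last column
    have stepC : D.det = (∏ i : Fin n, (x (L:ℕ) - x ((i:ℕ)))) *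
        ((∏ j : Fin n, ((y (L:ℕ) - y (j:ℕ)) * (x (L:ℕ) + y (j:ℕ))⁻¹)) *
          (Matrix.of fun i j : Fin n => (x (i:ℕ) + y (j:ℕ))⁻¹).det) := by
      rw [Matrix.det_succ_column D L]
      rw [Finset.sum_eq_single L]
      · have hDLL : D L L = 1 := by simp [hDdef, hCdef]
        rw [hDLL]
        have hsucc : L.succAbove = Fin.castSucc := Fin.succAbove_last
        have hsub : (D.submatrix L.succAbove L.succAbove) =
            Matrix.of (fun i j : Fin n => (x (L:ℕ) - x ((i:ℕ))) *
              ((((y (L:ℕ) - y ((j:ℕ))) * (x (L:ℕ) + y ((j:ℕ)))⁻¹)) *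
                ((Matrix.of fun i j : Fin n => (x (i:ℕ) + y (j:ℕ))⁻¹) i j))) := by
          ext i j
          have hi : Fin.castSucc i ≠ L := (Fin.castSucc_lt_last i).ne
          have hj : Fin.castSucc j ≠ L := (Fin.castSucc_lt_last j).ne
          simp only [Matrix.submatrix_apply, hsucc, hDdef, Matrix.of_apply, if_neg hi,
            if_neg hj, Fin.coe_castSucc]
          ring
        rw [hsub, det_row_col_factor]
        have hev : ((-1 : ℂ)) ^ ((L:ℕ) + (L:ℕ)) = 1 := Even.neg_one_pow ⟨n, by simp [hLv]⟩
        rw [hev, one_mul, one_mul]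
      · intro b _ hb
        have : D b L = 0 := by simp [hDdef, hb]
        simp [this]
      · simp
    have hxy' : ∀ i j, i < n → j < n → x i + y j ≠ 0 :=
      fun i j hi hj => hxy i j (Nat.lt_succ_of_lt hi) (Nat.lt_succ_of_lt hj)
    have hQn : (∏ i ∈ range n, ∏ j ∈ range n, (x i + y j)) ≠ 0 :=
      Finset.prod_ne_zero_iff.mpr fun i hi => Finset.prod_ne_zero_iff.mpr fun j hj =>
        hxy' i j (mem_range.mp hi) (mem_range.mp hj)
    have hR : (∏ i ∈ range n, (x i + y n)) ≠ 0 :=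
      Finset.prod_ne_zero_iff.mpr fun i hi =>
        hxy i n (Nat.lt_succ_of_lt (mem_range.mp hi)) (Nat.lt_succ_self n)
    have hS : (∏ j ∈ range n, (x n + y j)) ≠ 0 :=
      Finset.prod_ne_zero_iff.mpr fun j hj =>
        hxy n j (Nat.lt_succ_self n) (Nat.lt_succ_of_lt (mem_range.mp hj))
    have hT : x n + y n ≠ 0 := hxy n n (Nat.lt_succ_self n) (Nat.lt_succ_self n)
    show M.det = _
    rw [stepA, stepB, stepC, ih hxy']
    simp only [hLv]
    rw [Fin.prod_univ_eq_prod_range (fun i => (x i + y n)⁻¹) (n+1),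
        Fin.prod_univ_eq_prod_range (fun i => x n - x i) n,
        Fin.prod_univ_eq_prod_range (fun j => (y n - y j) * (x n + y j)⁻¹) n]
    simp only [prod_range_succ, prod_mul_distrib, prod_inv_distrib]
    field_simp

lemma nat_prod_sub (j : ℕ) : ∏ i ∈ range j, (j - i) = j.factorial := by
  induction j with
  | zero => simp
  | succ m ihm =>
    rw [Finset.prod_range_succ' (fun i => m + 1 - i) m]
    simp only [Nat.succ_sub_succ, Nat.sub_zero]
    rw [ihm, Nat.factorial_succ, mul_comm]

lemma prod_sub_eq_factorial (j : ℕ) : ∏ i ∈ range j, ((j : ℂ) - i) = j.factorial := by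
  have h : ∀ i ∈ range j, ((j : ℂ) - i) = ((j - i : ℕ) : ℂ) := by
    intro i hi
    have hij : i ≤ j := (mem_range.mp hi).le
    push_cast [hij]
    ring
  rw [Finset.prod_congr rfl h, ← Nat.cast_prod, nat_prod_sub]

lemma two_sum_range_id (n : ℕ) : 2 * (∑ j ∈ range n, j) + n = n * n := by
  induction n with
  | zero => rfl
  | succ m ihm =>
    rw [Finset.sum_range_succ]
    ring_nf
    ring_nf at ihm
    omega

lemma icc_prod_eq (f : ℕ → ℂ) (n : ℕ) : ∏ i ∈ Icc 1 n, f i = ∏ i ∈ range n, f (1 + i) := by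
  rw [← Finset.Ico_add_one_right_eq_Icc, Finset.prod_Ico_eq_prod_range]
  simp

theorem stmt7 (lam mu : ℂ) (n k : ℕ) (hlam : lam ≠ 0)
    (hden : ∀ m : ℕ, lam * m + mu ≠ 0) :
    (Matrix.of fun i j : Fin n =>
        (1 : ℂ) / (lam * ((i : ℕ) + (j : ℕ) + k : ℕ) + mu)).det =
      1 / lam ^ n *
        ((∏ i ∈ Finset.Icc 1 (n - 1), (i.factorial : ℂ) ^ 2) /
          ∏ i ∈ Finset.Icc 1 n, ∏ j ∈ Finset.Icc 1 n, ((i : ℂ) + j + k + mu / lam - 2)) := by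
  set x : ℕ → ℂ := fun i => lam * ((i : ℂ) + k) + mu with hx
  set y : ℕ → ℂ := fun j => lam * (j : ℂ) with hy
  have hsum : ∀ i j : ℕ, x i + y j = lam * ((i : ℂ) + j + k + mu / lam) := by
    intro i j
    simp only [hx, hy]
    field_simp
    ring
  have hne : ∀ i j : ℕ, x i + y j ≠ 0 := by
    intro i j
    have h := hden (i + j + k)
    have : x i + y j = lam * ((i + j + k : ℕ) : ℂ) + mu := by
      simp only [hx, hy]; push_cast; ring
    rw [this]
    exact h
  have hM : (Matrix.of fun i j : Fin n =>
      (1 : ℂ) / (lam * ((i : ℕ) + (j : ℕ) + k : ℕ) + mu)) =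
      Matrix.of fun i j : Fin n => (x (i : ℕ) + y (j : ℕ))⁻¹ := by
    ext i j
    rw [Matrix.of_apply, Matrix.of_apply, one_div]
    congr 1
    simp only [hx, hy]
    push_cast
    ring
  rw [hM, cauchy_det x y n (fun i j _ _ => hne i j)]
  -- numerator
  have hfactor : ∀ j : ℕ, ∏ i ∈ range j, ((x j - x i) * (y j - y i)) =
      (lam ^ 2) ^ j * ((j.factorial : ℂ)) ^ 2 := by
    intro j
    have e : ∀ i ∈ range j, (x j - x i) * (y j - y i) = lam ^ 2 * ((j : ℂ) - i) ^ 2 := by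
      intro i hi
      simp only [hx, hy]
      ring
    rw [Finset.prod_congr rfl e, Finset.prod_mul_distrib, Finset.prod_const,
      Finset.prod_pow, prod_sub_eq_factorial, Finset.card_range]
  have hP : (∏ j ∈ range n, ∏ i ∈ range j, ((x j - x i) * (y j - y i))) =
      lam ^ (2 * ∑ j ∈ range n, j) * ∏ j ∈ range n, (j.factorial : ℂ) ^ 2 := by
    simp_rw [hfactor]
    rw [Finset.prod_mul_distrib, Finset.prod_pow_eq_pow_sum, ← pow_mul]
  have hF : (∏ j ∈ range n, (j.factorial : ℂ) ^ 2) =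
      ∏ i ∈ Finset.Icc 1 (n - 1), (i.factorial : ℂ) ^ 2 := by
    cases n with
    | zero => simp
    | succ m =>
      rw [Finset.prod_range_succ' (fun j => (j.factorial : ℂ) ^ 2) m,
        icc_prod_eq (fun i => (i.factorial : ℂ) ^ 2) ((m + 1) - 1)]
      simp [add_comm]
  -- denominator
  have hQ : (∏ i ∈ range n, ∏ j ∈ range n, (x i + y j)) =
      lam ^ (n * n) * ∏ i ∈ range n, ∏ j ∈ range n, ((i : ℂ) + j + k + mu / lam) := by
    simp_rw [hsum, Finset.prod_mul_distrib, Finset.prod_const, Finset.card_range,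
      ← pow_mul]
  have hG : (∏ i ∈ Finset.Icc 1 n, ∏ j ∈ Finset.Icc 1 n, ((i : ℂ) + j + k + mu / lam - 2)) =
      ∏ i ∈ range n, ∏ j ∈ range n, ((i : ℂ) + j + k + mu / lam) := by
    rw [icc_prod_eq (fun i => ∏ j ∈ Finset.Icc 1 n, ((i : ℂ) + j + k + mu / lam - 2)) n]
    refine Finset.prod_congr rfl fun i _ => ?_
    rw [icc_prod_eq (fun j => (((1 + i : ℕ) : ℂ)) + j + k + mu / lam - 2) n]
    refine Finset.prod_congr rfl fun j _ => ?_
    push_cast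
    ring
  have hGne : (∏ i ∈ range n, ∏ j ∈ range n, ((i : ℂ) + j + k + mu / lam)) ≠ 0 := by
    refine Finset.prod_ne_zero_iff.mpr fun i _ => Finset.prod_ne_zero_iff.mpr fun j _ => ?_
    intro h0
    apply hne i j
    rw [hsum, h0, mul_zero]
  rw [hP, hF, hQ, hG]
  have h1 : lam ^ (2 * ∑ j ∈ range n, j) ≠ 0 := pow_ne_zero _ hlam
  have h3 : lam ^ (n * n) = lam ^ (2 * ∑ j ∈ range n, j) * lam ^ n := by
    rw [← pow_add, two_sum_range_id]
  rw [h3, mul_assoc, mul_div_mul_left _ _ h1, div_mul_eq_div_div_swap, one_div_mul_eq_div]
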